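/- The following are equivalent: (c₃) 𝒩₃ := ⋃_{u∈𝒰} co cone(u(T) ∪ {(0_{X*},1)}) is a closed and convex subset of X*×ℝ (weak*-topology on X* times the usual topology on ℝ); (d₃) for every c ∈ X* with inf(RLIP_c) > −∞ there exist ū ∈ 𝒰 and λ̄ ∈ ℝ₊^{(T)} such that c = −∑_{t∈supp λ̄} λ̄_t ū_t¹ and −∑_{t∈supp λ̄} λ̄_t ū_t² = inf(RLIP_c) (stable robust strong duality for the pair (RLIP_c)–(RLID³_c)). -/

import Mathlib

open Pointwise

variable {X : Type*} [AddCommGroup X] [Module ℝ X] [TopologicalSpace X]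
  [IsTopologicalAddGroup X] [ContinuousSMul ℝ X] [LocallyConvexSpace ℝ X] [T2Space X]
  {T : Type*}

/-- The cone generated by a set `A`: `cone A = {λa : λ ≥ 0, a ∈ A}`. -/
def coneSet {E : Type*} [SMul ℝ E] (A : Set E) : Set E :=
  {p | ∃ l : ℝ, 0 ≤ l ∧ ∃ a ∈ A, p = l • a}

/-- The optimal value of the robust primal problem (RLIP_c). -/
noncomputable def infRLIP (U : T → Set (WeakDual ℝ X × ℝ)) (c : WeakDual ℝ X) : EReal :=
  ⨅ x : {x : X | ∀ t, ∀ v ∈ U t, v.1 x ≤ v.2}, ((c x.1 : ℝ) : EReal)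

/-- Theorem 4.1, case i = 3: the robust moment cone
𝒩₃ = ⋃_{u∈𝒰} co cone(u(T) ∪ {(0,1)}) is closed and convex iff stable robust strong
duality holds for the pair (RLIP_c)-(RLID³_c). -/
noncomputable instance : LocallyConvexSpace ℝ (WeakDual ℝ X) := WeakBilin.locallyConvexSpace

namespace Stmt13Aux

/-- evaluation at `x` as a linear map on the weak dual -/
noncomputable def evalLM (x : X) : WeakDual ℝ X →ₗ[ℝ] ℝ where
  toFun p := p x
  map_add' _ _ := rfl
  map_smul' _ _ := rfl

theorem exists_eval (f : WeakDual ℝ X →L[ℝ] ℝ) : ∃ x : X, ∀ p : WeakDual ℝ X, f p = p x := by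
  have hS : f ⁻¹' (Set.Ioo (-1 : ℝ) 1) ∈ nhds (0 : WeakDual ℝ X) := by
    apply f.continuous.continuousAt.preimage_mem_nhds
    simp only [map_zero]
    exact Ioo_mem_nhds (by norm_num) (by norm_num)
  have hnhds : nhds (0 : WeakDual ℝ X) = Filter.comap (fun (p : WeakDual ℝ X) (x : X) => p x)
      (nhds (fun _ : X => (0 : ℝ))) := nhds_induced _ _
  rw [hnhds] at hS
  obtain ⟨V, hV, hVS⟩ := hS
  rw [nhds_pi] at hV
  obtain ⟨I, W, hW, hIW⟩ := Filter.mem_pi'.mp hV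
  have hker : ∀ p : WeakDual ℝ X, (∀ x ∈ I, p x = 0) → f p = 0 := by
    intro p hp
    by_contra hfp
    have key : ∀ t : ℝ, |f (t • p)| < 1 := by
      intro t
      have hmem : (fun x : X => (t • p) x) ∈ V := by
        apply hIW
        intro x hx
        show (t • p) x ∈ W x
        have h0 : (t • p) x = t * p x := rfl
        rw [h0, hp x hx, mul_zero]
        exact mem_of_mem_nhds (hW x)
      have := hVS hmem
      simp only [Set.mem_preimage, Set.mem_Ioo] at this
      rw [abs_lt]; exact this
    have h2 := key ((2 : ℝ) / f p)
    rw [map_smul, smul_eq_mul, abs_mul, abs_div, div_mul_cancel₀] at h2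
    · norm_num at h2
    · exact abs_ne_zero.mpr hfp
  have hspan : (f : WeakDual ℝ X →ₗ[ℝ] ℝ) ∈
      Submodule.span ℝ (Set.range fun i : I => evalLM (i : X)) := by
    apply mem_span_of_iInf_ker_le_ker
    intro p hp
    simp only [Submodule.mem_iInf, LinearMap.mem_ker] at hp ⊢
    exact hker p fun x hx => hp ⟨x, hx⟩
  obtain ⟨c, hc⟩ := (Submodule.mem_span_range_iff_exists_fun ℝ).mp hspan
  refine ⟨∑ i : I, c i • (i : X), fun p => ?_⟩
  have := LinearMap.congr_fun hc p
  simp only [LinearMap.coe_sum, Finset.sum_apply, LinearMap.smul_apply,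
    ContinuousLinearMap.coe_coe] at this
  rw [← this, map_sum]
  congr 1
  ext i
  rw [map_smul]
  rfl

section ConeFacts

variable {E : Type*} [AddCommGroup E] [Module ℝ E]

theorem coneSet_mono {A B : Set E} (h : A ⊆ B) : coneSet A ⊆ coneSet B := by
  rintro p ⟨l, hl, a, ha, rfl⟩
  exact ⟨l, hl, a, h ha, rfl⟩

theorem zero_mem_coneSet {A : Set E} (h : A.Nonempty) : 0 ∈ coneSet A := by
  obtain ⟨a, ha⟩ := h
  exact ⟨0, le_refl _, a, ha, (zero_smul ℝ a).symm⟩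

theorem smul_mem_coneSet {A : Set E} {l : ℝ} (hl : 0 ≤ l) {a : E} (ha : a ∈ A) :
    l • a ∈ coneSet A := ⟨l, hl, a, ha, rfl⟩

theorem mem_coneSet_self {A : Set E} {a : E} (ha : a ∈ A) : a ∈ coneSet A :=
  ⟨1, zero_le_one, a, ha, (one_smul ℝ a).symm⟩

theorem smul_mem_hull_coneSet {A : Set E} {l : ℝ} (hl : 0 ≤ l) {p : E}
    (hp : p ∈ convexHull ℝ (coneSet A)) : l • p ∈ convexHull ℝ (coneSet A) := by
  have h1 : l • coneSet A ⊆ coneSet A := by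
    rintro _ ⟨q, ⟨m, hm, a, ha, rfl⟩, rfl⟩
    exact ⟨l * m, mul_nonneg hl hm, a, ha, (mul_smul l m a).symm⟩
  have h2 : l • p ∈ l • convexHull ℝ (coneSet A) := Set.smul_mem_smul_set hp
  rw [← convexHull_smul] at h2
  exact convexHull_mono h1 h2

theorem add_mem_hull_coneSet {A : Set E} {p q : E} (hp : p ∈ convexHull ℝ (coneSet A))
    (hq : q ∈ convexHull ℝ (coneSet A)) : p + q ∈ convexHull ℝ (coneSet A) := by
  have hmid : (1 / 2 : ℝ) • p + (1 / 2 : ℝ) • q ∈ convexHull ℝ (coneSet A) :=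
    (convex_convexHull ℝ (coneSet A)) hp hq (by norm_num) (by norm_num) (by norm_num)
  have := smul_mem_hull_coneSet (l := 2) (by norm_num) hmid
  rwa [smul_add, ← mul_smul, ← mul_smul, show (2 : ℝ) * (1 / 2) = 1 by norm_num, one_smul,
    one_smul] at this

/-- Representation of elements of `co cone (range u ∪ {e})` as finite nonnegative
combinations. -/
theorem mem_hull_coneSet_iff (u : T → E) (e : E) {p : E} :
    p ∈ convexHull ℝ (coneSet (Set.range u ∪ {e})) ↔
      ∃ μ : T →₀ ℝ, (∀ t, 0 ≤ μ t) ∧ ∃ ρ : ℝ, 0 ≤ ρ ∧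
        p = (μ.sum fun t a => a • u t) + ρ • e := by
  classical
  constructor
  · intro hp
    set D : Set E := {p | ∃ μ : T →₀ ℝ, (∀ t, 0 ≤ μ t) ∧ ∃ ρ : ℝ, 0 ≤ ρ ∧
        p = (μ.sum fun t a => a • u t) + ρ • e} with hD
    have hsub : coneSet (Set.range u ∪ {e}) ⊆ D := by
      rintro _ ⟨l, hl, a, (⟨t, rfl⟩ | rfl), rfl⟩
      · refine ⟨Finsupp.single t l, ?_, 0, le_refl _, ?_⟩
        · intro s
          rw [Finsupp.single_apply]
          split <;> simp [hl]
        · rw [Finsupp.sum_single_index (zero_smul ℝ (u t)), zero_smul, add_zero]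
      · exact ⟨0, fun t => le_refl _, l, hl, by simp⟩
    have hconv : Convex ℝ D := by
      rintro p ⟨μ₁, hμ₁, ρ₁, hρ₁, rfl⟩ q ⟨μ₂, hμ₂, ρ₂, hρ₂, rfl⟩ a b ha hb hab
      refine ⟨a • μ₁ + b • μ₂, ?_, a * ρ₁ + b * ρ₂, ?_, ?_⟩
      · intro t
        simp only [Finsupp.coe_add, Finsupp.coe_smul, Pi.add_apply, Pi.smul_apply,
          smul_eq_mul]
        exact add_nonneg (mul_nonneg ha (hμ₁ t)) (mul_nonneg hb (hμ₂ t))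
      · exact add_nonneg (mul_nonneg ha hρ₁) (mul_nonneg hb hρ₂)
      · have hsum : ((a • μ₁ + b • μ₂).sum fun t c => c • u t) =
            a • (μ₁.sum fun t c => c • u t) + b • (μ₂.sum fun t c => c • u t) := by
          rw [Finsupp.sum_add_index' (fun t => zero_smul ℝ (u t))
            (fun t c₁ c₂ => add_smul c₁ c₂ (u t))]
          congr 1
          · rw [Finsupp.sum_smul_index' (fun t => zero_smul ℝ (u t)), Finsupp.smul_sum]
            simp_rw [smul_smul]
            rfl
          · rw [Finsupp.sum_smul_index' (fun t => zero_smul ℝ (u t)), Finsupp.smul_sum]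
            simp_rw [smul_smul]
            rfl
        rw [hsum]
        module
    exact convexHull_min hsub hconv hp
  · rintro ⟨μ, hμ, ρ, hρ, rfl⟩
    have hsum : (μ.sum fun t a => a • u t) ∈ convexHull ℝ (coneSet (Set.range u ∪ {e})) := by
      rw [Finsupp.sum]
      refine Finset.sum_induction _ _ (fun a b ha hb => add_mem_hull_coneSet ha hb) ?_ ?_
      · exact subset_convexHull ℝ _ (zero_mem_coneSet ⟨e, Or.inr rfl⟩)
      · intro t ht
        exact subset_convexHull ℝ _ (smul_mem_coneSet (hμ t) (Or.inl ⟨t, rfl⟩))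
    exact add_mem_hull_coneSet hsum
      (subset_convexHull ℝ _ (smul_mem_coneSet hρ (Or.inr rfl)))

end ConeFacts

section Main

variable (U : T → Set (WeakDual ℝ X × ℝ))

/-- The big moment cone `M`. -/
def Mset : Set (WeakDual ℝ X × ℝ) :=
  convexHull ℝ (coneSet ((⋃ t, U t) ∪ {((0 : WeakDual ℝ X), (1 : ℝ))}))

/-- The halfspace lemma: the closure of `M` is contained in each halfspace determined by a
feasible point. -/
theorem closure_Mset_halfspace {x : X} (hx : ∀ t, ∀ v ∈ U t, v.1 x ≤ v.2) :
    ∀ p ∈ closure (Mset U), p.1 x ≤ p.2 := by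
  set H : Set (WeakDual ℝ X × ℝ) := {p | p.1 x ≤ p.2} with hHdef
  have hclosed : IsClosed H :=
    isClosed_le ((WeakDual.eval_continuous x).comp continuous_fst) continuous_snd
  have hconv : Convex ℝ H := by
    rintro p hp q hq a b ha hb hab
    have h1 : (a • p + b • q).1 x = a * p.1 x + b * q.1 x := rfl
    have h2 : (a • p + b • q).2 = a * p.2 + b * q.2 := rfl
    simp only [H, Set.mem_setOf_eq] at hp hq ⊢
    rw [h1, h2]
    have := mul_le_mul_of_nonneg_left hp ha
    have := mul_le_mul_of_nonneg_left hq hb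
    linarith
  have hsub : coneSet ((⋃ t, U t) ∪ {((0 : WeakDual ℝ X), (1 : ℝ))}) ⊆ H := by
    rintro _ ⟨l, hl, a, (ha | rfl), rfl⟩
    · obtain ⟨s, hs⟩ := Set.mem_iUnion.mp ha
      have hax : a.1 x ≤ a.2 := hx s a hs
      show (l • a).1 x ≤ (l • a).2
      have h1 : (l • a).1 x = l * a.1 x := rfl
      have h2 : (l • a).2 = l * a.2 := rfl
      rw [h1, h2]
      exact mul_le_mul_of_nonneg_left hax hl
    · show (l • ((0 : WeakDual ℝ X), (1 : ℝ))).1 x ≤ (l • ((0 : WeakDual ℝ X), (1 : ℝ))).2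
      have h1 : (l • ((0 : WeakDual ℝ X), (1 : ℝ))).1 x = 0 := by
        show (l • (0 : WeakDual ℝ X)) x = 0
        rw [smul_zero]
        rfl
      rw [h1]
      show (0 : ℝ) ≤ l * 1
      rw [mul_one]; exact hl
  intro p hp
  exact hclosed.closure_subset_iff.mpr (convexHull_min hsub hconv) hp

/-- Generalized Farkas lemma. -/
theorem farkas (hF : {x : X | ∀ t, ∀ v ∈ U t, v.1 x ≤ v.2}.Nonempty)
    (c : WeakDual ℝ X) (α : ℝ)
    (h : ∀ x, (∀ t, ∀ v ∈ U t, v.1 x ≤ v.2) → α ≤ c x) :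
    (-c, -α) ∈ closure (Mset U) := by
  by_contra hnot
  obtain ⟨f, w, hfM, hfc⟩ := geometric_hahn_banach_closed_point
    ((convex_convexHull ℝ _).closure) isClosed_closure hnot
  -- 0 ∈ M, so w > 0
  have h0M : (0 : WeakDual ℝ X × ℝ) ∈ Mset U :=
    subset_convexHull ℝ _ (zero_mem_coneSet ⟨_, Or.inr rfl⟩)
  have hw : 0 < w := by
    have := hfM 0 (subset_closure h0M)
    rwa [map_zero] at this
  -- f ≤ 0 on M
  have hfle : ∀ p ∈ Mset U, f p ≤ 0 := by
    intro p hp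
    by_contra hpos
    push_neg at hpos
    have ht : (0 : ℝ) ≤ (w + 1) / f p := div_nonneg (by linarith) (le_of_lt hpos)
    have := hfM (((w + 1) / f p) • p) (subset_closure (smul_mem_hull_coneSet ht hp))
    rw [map_smul, smul_eq_mul, div_mul_cancel₀ _ (ne_of_gt hpos)] at this
    linarith
  -- decompose f
  set g : WeakDual ℝ X →L[ℝ] ℝ := f.comp (ContinuousLinearMap.inl ℝ (WeakDual ℝ X) ℝ) with hg
  set s : ℝ := f ((0 : WeakDual ℝ X), (1 : ℝ)) with hs
  have hdecomp : ∀ p : WeakDual ℝ X × ℝ, f p = g p.1 + p.2 * s := by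
    rintro ⟨p, r⟩
    have h1 : ((p, r) : WeakDual ℝ X × ℝ) = (p, 0) + r • ((0 : WeakDual ℝ X), (1 : ℝ)) := by
      ext
      · show p = p + r • (0 : WeakDual ℝ X)
        rw [smul_zero, add_zero]
      · show r = 0 + r * 1
        ring
    calc f (p, r) = f ((p, 0) + r • ((0 : WeakDual ℝ X), (1 : ℝ))) := by rw [← h1]
      _ = f (p, 0) + r * f ((0 : WeakDual ℝ X), (1 : ℝ)) := by rw [map_add, map_smul, smul_eq_mul]
      _ = g (p, r).1 + (p, r).2 * s := rfl
  obtain ⟨x, hxg⟩ := exists_eval g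
  -- constraints under f
  have hUf : ∀ t, ∀ v ∈ U t, v.1 x + v.2 * s ≤ 0 := by
    intro t v hv
    have hvM : v ∈ Mset U :=
      subset_convexHull ℝ _ (mem_coneSet_self (Or.inl (Set.mem_iUnion.mpr ⟨t, hv⟩)))
    have := hfle v hvM
    rwa [hdecomp, hxg] at this
  have hsle : s ≤ 0 := by
    have heM : ((0 : WeakDual ℝ X), (1 : ℝ)) ∈ Mset U :=
      subset_convexHull ℝ _ (mem_coneSet_self (Or.inr rfl))
    exact hfle _ heM
  have hfc' : 0 < -(c x) - α * s := by
    have := hfc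
    rw [hdecomp, hxg] at this
    rw [show ((-c, -α) : WeakDual ℝ X × ℝ).2 = -α from rfl] at this
    have h0 : ((-c, -α) : WeakDual ℝ X × ℝ).1 x = -(c x) := by
      show (-c : WeakDual ℝ X) x = -(c x); rfl
    rw [h0] at this
    linarith
  rcases lt_or_eq_of_le hsle with hslt | hseq
  · -- s < 0
    set y : X := (-s)⁻¹ • x with hy
    have hyF : ∀ t, ∀ v ∈ U t, v.1 y ≤ v.2 := by
      intro t v hv
      have h1 : v.1 y = (-s)⁻¹ * v.1 x := by
        rw [hy, map_smul, smul_eq_mul]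
      have h2 : v.1 x ≤ -(v.2 * s) := by linarith [hUf t v hv]
      rw [h1]
      have hinv : 0 < (-s)⁻¹ := inv_pos.mpr (by linarith)
      calc (-s)⁻¹ * v.1 x ≤ (-s)⁻¹ * (-(v.2 * s)) := by
            exact mul_le_mul_of_nonneg_left h2 (le_of_lt hinv)
        _ = v.2 * ((-s)⁻¹ * (-s)) := by ring
        _ = v.2 := by rw [inv_mul_cancel₀ (by linarith), mul_one]
    have hcy : α ≤ c y := h y hyF
    have h1 : c y = (-s)⁻¹ * c x := by rw [hy, map_smul, smul_eq_mul]
    have hinv : 0 < (-s)⁻¹ := inv_pos.mpr (by linarith)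
    -- from hfc' : -(c x) > α * s, multiply by (-s)⁻¹
    have h2 : c x < α * (-s) := by nlinarith
    have h3 : c y < α := by
      rw [h1]
      calc (-s)⁻¹ * c x < (-s)⁻¹ * (α * (-s)) := by
            exact mul_lt_mul_of_pos_left h2 hinv
        _ = α * ((-s)⁻¹ * (-s)) := by ring
        _ = α := by rw [inv_mul_cancel₀ (by linarith), mul_one]
    linarith
  · -- s = 0
    rw [hseq] at hfc' hUf
    simp only [mul_zero, add_zero, sub_zero] at hfc' hUf
    obtain ⟨x₀, hx₀⟩ := hF
    have hcx : c x < 0 := by linarith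
    have hα₀ : α ≤ c x₀ := h x₀ hx₀
    have hne : -(c x) ≠ 0 := by linarith
    obtain ⟨τ, hτ⟩ : ∃ τ : ℝ, τ = (c x₀ - α + 1) / (-(c x)) := ⟨_, rfl⟩
    have hτpos : 0 ≤ τ := by
      rw [hτ]
      apply div_nonneg <;> linarith
    have hτc : τ * c x = -(c x₀ - α + 1) := by
      have h4 : τ * -(c x) = c x₀ - α + 1 := by
        rw [hτ, div_mul_cancel₀ _ hne]
      linarith [h4]
    have hxF : ∀ t, ∀ v ∈ U t, v.1 (x₀ + τ • x) ≤ v.2 := by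
      intro t v hv
      rw [map_add, map_smul, smul_eq_mul]
      have h1 := hx₀ t v hv
      have h2 := hUf t v hv
      have h3 : τ * v.1 x ≤ 0 := mul_nonpos_iff.mpr (Or.inl ⟨hτpos, h2⟩)
      linarith
    have h5 := h _ hxF
    rw [map_add, map_smul, smul_eq_mul, hτc] at h5
    linarith

theorem fst_finsupp_sum (u : T → WeakDual ℝ X × ℝ) (μ : T →₀ ℝ) :
    (μ.sum fun t a => a • u t).1 = μ.sum fun t a => a • (u t).1 := by
  rw [Finsupp.sum, Finsupp.sum, Prod.fst_sum]
  exact Finset.sum_congr rfl fun t _ => rfl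

theorem snd_finsupp_sum (u : T → WeakDual ℝ X × ℝ) (μ : T →₀ ℝ) :
    (μ.sum fun t a => a • u t).2 = μ.sum fun t a => a * (u t).2 := by
  rw [Finsupp.sum, Finsupp.sum, Prod.snd_sum]
  exact Finset.sum_congr rfl fun t _ => rfl

theorem eval_finsupp_sum (u : T → WeakDual ℝ X × ℝ) (μ : T →₀ ℝ) (x : X) :
    (μ.sum fun t a => a • (u t).1) x = μ.sum fun t a => a * ((u t).1 x) := by
  have := map_finsuppSum (evalLM (X := X) x) μ (fun t a => a • (u t).1)
  exact this

/-- `N ⊆ M`. -/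
theorem N_subset_M :
    (⋃ u : {u : T → WeakDual ℝ X × ℝ // ∀ s, u s ∈ U s}, convexHull ℝ
      (coneSet (Set.range (fun t => u.1 t) ∪ {((0 : WeakDual ℝ X), (1 : ℝ))}))) ⊆ Mset U := by
  intro p hp
  obtain ⟨u, hpu⟩ := Set.mem_iUnion.mp hp
  refine convexHull_mono (coneSet_mono (Set.union_subset_union_left _ ?_)) hpu
  rintro _ ⟨t, rfl⟩
  exact Set.mem_iUnion.mpr ⟨t, u.2 t⟩

/-- The generators of `M` belong to `N`. -/
theorem coneSet_subset_N (hU : ∀ t, (U t).Nonempty) :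
    coneSet ((⋃ t, U t) ∪ {((0 : WeakDual ℝ X), (1 : ℝ))}) ⊆
      ⋃ u : {u : T → WeakDual ℝ X × ℝ // ∀ s, u s ∈ U s}, convexHull ℝ
        (coneSet (Set.range (fun t => u.1 t) ∪ {((0 : WeakDual ℝ X), (1 : ℝ))})) := by
  classical
  choose u₀ hu₀ using hU
  rintro _ ⟨l, hl, a, (ha | rfl), rfl⟩
  · obtain ⟨t, ht⟩ := Set.mem_iUnion.mp ha
    refine Set.mem_iUnion.mpr ⟨⟨Function.update u₀ t a, ?_⟩, ?_⟩
    · intro s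
      by_cases hs : s = t
      · subst hs
        rw [Function.update_self]
        exact ht
      · rw [Function.update_of_ne hs]
        exact hu₀ s
    · refine subset_convexHull ℝ _ (smul_mem_coneSet hl (Or.inl ⟨t, ?_⟩))
      simp [Function.update_self]
  · exact Set.mem_iUnion.mpr ⟨⟨u₀, hu₀⟩,
      subset_convexHull ℝ _ (smul_mem_coneSet hl (Or.inr rfl))⟩

end Main

end Stmt13Aux

open Stmt13Aux

theorem stmt13 [Nonempty T] (U : T → Set (WeakDual ℝ X × ℝ)) (hU : ∀ t, (U t).Nonempty)
    (hF : {x : X | ∀ t, ∀ v ∈ U t, v.1 x ≤ v.2}.Nonempty) :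
    (IsClosed (⋃ u : {u : T → WeakDual ℝ X × ℝ // ∀ s, u s ∈ U s}, convexHull ℝ
        (coneSet (Set.range (fun t => u.1 t) ∪ {((0 : WeakDual ℝ X), (1 : ℝ))}))) ∧
      Convex ℝ (⋃ u : {u : T → WeakDual ℝ X × ℝ // ∀ s, u s ∈ U s}, convexHull ℝ
        (coneSet (Set.range (fun t => u.1 t) ∪ {((0 : WeakDual ℝ X), (1 : ℝ))})))) ↔
    (∀ c : WeakDual ℝ X, ⊥ < infRLIP U c →
      ∃ u : {u : T → WeakDual ℝ X × ℝ // ∀ s, u s ∈ U s}, ∃ μ : T →₀ ℝ,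
        (∀ t, 0 ≤ μ t) ∧ c = -(μ.sum fun t a => a • (u.1 t).1) ∧
        ((-(μ.sum fun t a => a * (u.1 t).2) : ℝ) : EReal) = infRLIP U c) := by
  classical
  set N := (⋃ u : {u : T → WeakDual ℝ X × ℝ // ∀ s, u s ∈ U s}, convexHull ℝ
      (coneSet (Set.range (fun t => u.1 t) ∪ {((0 : WeakDual ℝ X), (1 : ℝ))}))) with hNdef
  constructor
  · rintro ⟨hclosed, hconv⟩ c hc
    have hMN : Mset U ⊆ N := convexHull_min (coneSet_subset_N U hU) hconv
    have hNM : N ⊆ Mset U := N_subset_M U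
    have hMeqN : Mset U = N := Set.Subset.antisymm hMN hNM
    obtain ⟨x₀, hx₀⟩ := hF
    have hmle : infRLIP U c ≤ ((c x₀ : ℝ) : EReal) := by
      rw [infRLIP]; exact iInf_le _ (⟨x₀, hx₀⟩ : {x : X | ∀ t, ∀ v ∈ U t, v.1 x ≤ v.2})
    have hmtop : infRLIP U c ≠ ⊤ := ne_top_of_le_ne_top (EReal.coe_ne_top _) hmle
    have hmbot : infRLIP U c ≠ ⊥ := ne_of_gt hc
    set α : ℝ := (infRLIP U c).toReal with hα
    have hαm : (α : EReal) = infRLIP U c := EReal.coe_toReal hmtop hmbot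
    have hαle : ∀ x, (∀ t, ∀ v ∈ U t, v.1 x ≤ v.2) → α ≤ c x := by
      intro x hx
      have h1 : infRLIP U c ≤ ((c x : ℝ) : EReal) := by
        rw [infRLIP]; exact iInf_le _ (⟨x, hx⟩ : {x : X | ∀ t, ∀ v ∈ U t, v.1 x ≤ v.2})
      rw [← hαm] at h1
      exact_mod_cast h1
    have hmem := farkas U ⟨x₀, hx₀⟩ c α hαle
    rw [hMeqN, hclosed.closure_eq] at hmem
    obtain ⟨u, hpu⟩ := Set.mem_iUnion.mp hmem
    rw [mem_hull_coneSet_iff] at hpu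
    obtain ⟨μ, hμ, ρ, hρ, heq⟩ := hpu
    have hfst : -c = (μ.sum fun t a => a • (u.1 t).1) := by
      have h := congrArg Prod.fst heq
      rw [Prod.fst_add, fst_finsupp_sum] at h
      simpa using h
    have hsnd : -α = (μ.sum fun t a => a * (u.1 t).2) + ρ := by
      have h := congrArg Prod.snd heq
      rw [Prod.snd_add, snd_finsupp_sum] at h
      simpa using h
    have hwd : ∀ x, (∀ t, ∀ v ∈ U t, v.1 x ≤ v.2) → α + ρ ≤ c x := by
      intro x hx
      have hcx : c x = -((μ.sum fun t a => a • (u.1 t).1) x) := by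
        rw [← hfst]
        show c x = -(-(c x))
        rw [neg_neg]
      rw [hcx, eval_finsupp_sum]
      have hterm : (μ.sum fun t a => a * ((u.1 t).1 x)) ≤ μ.sum fun t a => a * (u.1 t).2 := by
        rw [Finsupp.sum, Finsupp.sum]
        apply Finset.sum_le_sum
        intro t _
        exact mul_le_mul_of_nonneg_left (hx t _ (u.2 t)) (hμ t)
      linarith [hsnd]
    have hρ0 : ρ = 0 := by
      have h1 : ((α + ρ : ℝ) : EReal) ≤ infRLIP U c := by
        rw [infRLIP]; exact le_iInf fun x => by exact_mod_cast hwd x.1 x.2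
      rw [← hαm] at h1
      have := EReal.coe_le_coe_iff.mp h1
      linarith
    refine ⟨u, μ, hμ, ?_, ?_⟩
    · rw [← hfst, neg_neg]
    · have h2 : -(μ.sum fun t a => a * (u.1 t).2) = α := by linarith [hsnd]
      rw [h2, hαm]
  · intro hd
    have hNM : N ⊆ Mset U := N_subset_M U
    have hclosureN : closure (Mset U) ⊆ N := by
      intro p hp
      obtain ⟨x₀, hx₀⟩ := hF
      have hlow : ∀ x, (∀ t, ∀ v ∈ U t, v.1 x ≤ v.2) → -p.2 ≤ (-p.1 : WeakDual ℝ X) x := by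
        intro x hx
        have h1 := closure_Mset_halfspace U hx p hp
        have h0 : (-p.1 : WeakDual ℝ X) x = -(p.1 x) := rfl
        rw [h0]
        linarith
      have hboundE : ((-p.2 : ℝ) : EReal) ≤ infRLIP U (-p.1) := by
        rw [infRLIP]; exact le_iInf fun x => by exact_mod_cast hlow x.1 x.2
      have hc : ⊥ < infRLIP U (-p.1) := lt_of_lt_of_le (EReal.bot_lt_coe _) hboundE
      obtain ⟨u, μ, hμ, hceq, hval⟩ := hd (-p.1) hc
      have hle : -p.2 ≤ -(μ.sum fun t a => a * (u.1 t).2) := by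
        rw [← hval] at hboundE
        exact_mod_cast hboundE
      refine Set.mem_iUnion.mpr ⟨u, ?_⟩
      rw [mem_hull_coneSet_iff]
      refine ⟨μ, hμ, p.2 - μ.sum (fun t a => a * (u.1 t).2), by linarith, ?_⟩
      have hS1 : μ.sum (fun t a => a • (u.1 t).1) = p.1 := by
        have h6 : -p.1 = -(μ.sum fun t a => a • (u.1 t).1) := hceq
        exact (neg_injective h6).symm
      apply Prod.ext_iff.mpr
      constructor
      · rw [Prod.fst_add, fst_finsupp_sum, Prod.smul_fst, hS1, smul_zero, add_zero]
      · rw [Prod.snd_add, snd_finsupp_sum, Prod.smul_snd]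
        show p.2 = _ + _ * (1 : ℝ)
        ring
    have hNeq : N = closure (Mset U) :=
      Set.Subset.antisymm (hNM.trans subset_closure) hclosureN
    constructor
    · rw [hNeq]
      exact isClosed_closure
    · rw [hNeq]
      exact (convex_convexHull ℝ _).closure
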